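/- Let v1, v2, y be jointly distributed random variables and z1 satisfy I(y; z1 | v1, v2) = 0. Then I(y; z1) ≥ I(y; (v1, v2)) − I(v1; v2 | z1) − I(v1; y | v2) − I(v2; y | v1). -/

import Mathlib

open scoped BigOperators

noncomputable def condMI {Ω A B C : Type} [Fintype Ω] [Fintype A] [Fintype B] [Fintype C]
    [DecidableEq A] [DecidableEq B] [DecidableEq C]
    (p : Ω → ℝ) (X : Ω → A) (Y : Ω → B) (Z : Ω → C) : ℝ :=
  ∑ a : A, ∑ b : B, ∑ c : C,
    (∑ ω : Ω, if X ω = a ∧ Y ω = b ∧ Z ω = c then p ω else 0) *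
      Real.log
        ((∑ ω : Ω, if X ω = a ∧ Y ω = b ∧ Z ω = c then p ω else 0) *
            (∑ ω : Ω, if Z ω = c then p ω else 0) /
          ((∑ ω : Ω, if X ω = a ∧ Z ω = c then p ω else 0) *
            (∑ ω : Ω, if Y ω = b ∧ Z ω = c then p ω else 0)))

noncomputable def mi {Ω A B : Type} [Fintype Ω] [Fintype A] [Fintype B]
    [DecidableEq A] [DecidableEq B] (p : Ω → ℝ) (X : Ω → A) (Y : Ω → B) : ℝ :=
  condMI p X Y (fun _ => ())

section helpers
variable {Ω : Type} [Fintype Ω] (p : Ω → ℝ)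

lemma pr_congr {E F : Ω → Prop} [DecidablePred E] [DecidablePred F]
    (h : ∀ ω, E ω ↔ F ω) :
    (∑ ω : Ω, if E ω then p ω else 0) = ∑ ω : Ω, if F ω then p ω else 0 :=
  Finset.sum_congr rfl fun ω _ => if_congr (h ω) rfl rfl

lemma pr_nonneg (hp : ∀ ω, 0 ≤ p ω) {E : Ω → Prop} [DecidablePred E] :
    0 ≤ ∑ ω : Ω, if E ω then p ω else 0 :=
  Finset.sum_nonneg fun ω _ => by split <;> simp [hp ω]

lemma pr_mono (hp : ∀ ω, 0 ≤ p ω) {E F : Ω → Prop} [DecidablePred E] [DecidablePred F]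
    (h : ∀ ω, E ω → F ω) :
    (∑ ω : Ω, if E ω then p ω else 0) ≤ ∑ ω : Ω, if F ω then p ω else 0 := by
  refine Finset.sum_le_sum fun ω _ => ?_
  by_cases hE : E ω
  · rw [if_pos hE, if_pos (h ω hE)]
  · rw [if_neg hE]; split <;> simp [hp ω]

lemma pr_marg {α : Type} [Fintype α] [DecidableEq α] (f : Ω → α)
    {q : Ω → Prop} [DecidablePred q] :
    (∑ a : α, ∑ ω : Ω, if q ω ∧ f ω = a then p ω else 0)
      = ∑ ω : Ω, if q ω then p ω else 0 := by
  rw [Finset.sum_comm]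
  refine Finset.sum_congr rfl fun ω _ => ?_
  by_cases hq : q ω <;> simp [hq]

end helpers

lemma mi_term_ge (j u v w : ℝ) (hj : 0 ≤ j) (hju : j ≤ u) (hjv : j ≤ v)
    (huw : u ≤ w) :
    j - u * v / w ≤ j * Real.log (j * w / (u * v)) := by
  have hu0 : 0 ≤ u := le_trans hj hju
  have hv0 : 0 ≤ v := le_trans hj hjv
  have hw0 : 0 ≤ w := le_trans hu0 huw
  rcases eq_or_lt_of_le hj with h0 | hjpos
  · rw [← h0, zero_mul, zero_sub, neg_nonpos]; positivity
  · have hu : 0 < u := lt_of_lt_of_le hjpos hju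
    have hv : 0 < v := lt_of_lt_of_le hjpos hjv
    have hw : 0 < w := lt_of_lt_of_le hu huw
    have hlog : 1 - u * v / (j * w) ≤ Real.log (j * w / (u * v)) := by
      have h2 := Real.log_le_sub_one_of_pos (x := u * v / (j * w)) (by positivity)
      have h3 : Real.log (u * v / (j * w)) = - Real.log (j * w / (u * v)) := by
        rw [← Real.log_inv]; congr 1; rw [inv_div]
      linarith
    have h4 := mul_le_mul_of_nonneg_left hlog hj
    have h5 : j * (1 - u * v / (j * w)) = j - u * v / w := by
      field_simp
    linarith

lemma condMI_nonneg {Ω A B C : Type} [Fintype Ω] [Fintype A] [Fintype B] [Fintype C]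
    [DecidableEq A] [DecidableEq B] [DecidableEq C]
    (p : Ω → ℝ) (hp : ∀ ω, 0 ≤ p ω) (X : Ω → A) (Y : Ω → B) (Z : Ω → C) :
    0 ≤ condMI p X Y Z := by
  unfold condMI
  have key : (0:ℝ) = ∑ a : A, ∑ b : B, ∑ c : C,
      ((∑ ω : Ω, if X ω = a ∧ Y ω = b ∧ Z ω = c then p ω else 0)
        - (∑ ω : Ω, if X ω = a ∧ Z ω = c then p ω else 0) *
            (∑ ω : Ω, if Y ω = b ∧ Z ω = c then p ω else 0) /
            (∑ ω : Ω, if Z ω = c then p ω else 0)) := by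
    have swap1 : ∀ (g : A → B → C → ℝ), (∑ a : A, ∑ b : B, ∑ c : C, g a b c)
        = ∑ c : C, ∑ a : A, ∑ b : B, g a b c := by
      intro g
      rw [show (∑ a : A, ∑ b : B, ∑ c : C, g a b c)
            = ∑ a : A, ∑ c : C, ∑ b : B, g a b c from
          Finset.sum_congr rfl fun a _ => Finset.sum_comm, Finset.sum_comm]
    rw [swap1]
    symm
    refine Finset.sum_eq_zero fun c _ => ?_
    have hJm : ∀ a : A, (∑ b : B, ∑ ω : Ω, if X ω = a ∧ Y ω = b ∧ Z ω = c then p ω else 0)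
        = ∑ ω : Ω, if X ω = a ∧ Z ω = c then p ω else 0 := by
      intro a
      rw [show (∑ b : B, ∑ ω : Ω, if X ω = a ∧ Y ω = b ∧ Z ω = c then p ω else 0)
            = ∑ b : B, ∑ ω : Ω, if (X ω = a ∧ Z ω = c) ∧ Y ω = b then p ω else 0 from
          Finset.sum_congr rfl fun b _ => pr_congr p (fun ω => by tauto)]
      exact pr_marg p Y
    have hXm : (∑ a : A, ∑ ω : Ω, if X ω = a ∧ Z ω = c then p ω else 0)
        = ∑ ω : Ω, if Z ω = c then p ω else 0 := by
      rw [show (∑ a : A, ∑ ω : Ω, if X ω = a ∧ Z ω = c then p ω else 0)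
            = ∑ a : A, ∑ ω : Ω, if Z ω = c ∧ X ω = a then p ω else 0 from
          Finset.sum_congr rfl fun a _ => pr_congr p (fun ω => by tauto)]
      exact pr_marg p X
    have hYm : (∑ b : B, ∑ ω : Ω, if Y ω = b ∧ Z ω = c then p ω else 0)
        = ∑ ω : Ω, if Z ω = c then p ω else 0 := by
      rw [show (∑ b : B, ∑ ω : Ω, if Y ω = b ∧ Z ω = c then p ω else 0)
            = ∑ b : B, ∑ ω : Ω, if Z ω = c ∧ Y ω = b then p ω else 0 from
          Finset.sum_congr rfl fun b _ => pr_congr p (fun ω => by tauto)]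
      exact pr_marg p Y
    rw [Finset.sum_congr rfl fun (a : A) _ => Finset.sum_sub_distrib _ _,
        Finset.sum_sub_distrib]
    rw [Finset.sum_congr rfl fun a _ => hJm a, hXm]
    have : (∑ a : A, ∑ b : B,
        (∑ ω : Ω, if X ω = a ∧ Z ω = c then p ω else 0) *
          (∑ ω : Ω, if Y ω = b ∧ Z ω = c then p ω else 0) /
          (∑ ω : Ω, if Z ω = c then p ω else 0))
        = (∑ a : A, ∑ ω : Ω, if X ω = a ∧ Z ω = c then p ω else 0) *
          (∑ b : B, ∑ ω : Ω, if Y ω = b ∧ Z ω = c then p ω else 0) /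
          (∑ ω : Ω, if Z ω = c then p ω else 0) := by
      rw [Finset.sum_mul_sum, Finset.sum_div]
      exact Finset.sum_congr rfl fun a _ => (Finset.sum_div _ _ _).symm
    rw [this, hXm, hYm]
    rcases eq_or_lt_of_le (pr_nonneg p hp (E := fun ω => Z ω = c)) with h0 | hpos
    · rw [← h0, zero_mul, zero_div, sub_zero]
    · field_simp; ring
  refine key.trans_le ?_
  refine Finset.sum_le_sum fun a _ => Finset.sum_le_sum fun b _ =>
    Finset.sum_le_sum fun c _ => ?_
  refine mi_term_ge _ _ _ _ (pr_nonneg p hp) ?_ ?_ ?_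
  · exact pr_mono p hp fun ω h => ⟨h.1, h.2.2⟩
  · exact pr_mono p hp fun ω h => ⟨h.2.1, h.2.2⟩
  · exact pr_mono p hp fun ω h => h.2

def swapEquiv {α β : Type} : α × β ≃ β × α :=
  ⟨Prod.swap, Prod.swap, fun _ => rfl, fun _ => rfl⟩

lemma chain_term (j mabd mad mbd mbcd md : ℝ) (h0 : 0 ≤ j) (h1 : j ≤ mabd)
    (h2 : j ≤ mad) (h3 : j ≤ mbd) (h4 : j ≤ mbcd) (h5 : j ≤ md) :
    j * Real.log (j * md / (mad * mbcd))
      = j * Real.log (mabd * md / (mad * mbd))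
        + j * Real.log (j * mbd / (mabd * mbcd)) := by
  rcases eq_or_lt_of_le h0 with hz | hj
  · rw [← hz]; simp
  · have p1 : 0 < mabd := hj.trans_le h1
    have p2 : 0 < mad := hj.trans_le h2
    have p3 : 0 < mbd := hj.trans_le h3
    have p4 : 0 < mbcd := hj.trans_le h4
    have p5 : 0 < md := hj.trans_le h5
    have e : mabd * md / (mad * mbd) * (j * mbd / (mabd * mbcd))
        = j * md / (mad * mbcd) := by
      field_simp
    have q1 : (0:ℝ) < mabd * md / (mad * mbd) := by positivity
    have q2 : (0:ℝ) < j * mbd / (mabd * mbcd) := by positivity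
    rw [← mul_add, ← Real.log_mul q1.ne' q2.ne', e]

lemma condMI_chain {Ω A B C D : Type} [Fintype Ω] [Fintype A] [Fintype B] [Fintype C]
    [Fintype D] [DecidableEq A] [DecidableEq B] [DecidableEq C] [DecidableEq D]
    (p : Ω → ℝ) (hp : ∀ ω, 0 ≤ p ω) (X : Ω → A) (Y : Ω → B) (Z : Ω → C) (W : Ω → D) :
    condMI p X (fun ω => (Y ω, Z ω)) W
      = condMI p X Y W + condMI p X Z (fun ω => (Y ω, W ω)) := by
  unfold condMI
  simp only [Fintype.sum_prod_type, Prod.mk.injEq]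
  rw [← Finset.sum_add_distrib]
  refine Finset.sum_congr rfl fun a _ => ?_
  rw [show (∑ c : C, ∑ b : B, ∑ d : D,
        (∑ ω : Ω, if X ω = a ∧ Z ω = c ∧ Y ω = b ∧ W ω = d then p ω else 0) *
          Real.log
            ((∑ ω : Ω, if X ω = a ∧ Z ω = c ∧ Y ω = b ∧ W ω = d then p ω else 0) *
                (∑ ω : Ω, if Y ω = b ∧ W ω = d then p ω else 0) /
              ((∑ ω : Ω, if X ω = a ∧ Y ω = b ∧ W ω = d then p ω else 0) *
                (∑ ω : Ω, if Z ω = c ∧ Y ω = b ∧ W ω = d then p ω else 0))))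
      = ∑ b : B, ∑ c : C, ∑ d : D,
        (∑ ω : Ω, if X ω = a ∧ Z ω = c ∧ Y ω = b ∧ W ω = d then p ω else 0) *
          Real.log
            ((∑ ω : Ω, if X ω = a ∧ Z ω = c ∧ Y ω = b ∧ W ω = d then p ω else 0) *
                (∑ ω : Ω, if Y ω = b ∧ W ω = d then p ω else 0) /
              ((∑ ω : Ω, if X ω = a ∧ Y ω = b ∧ W ω = d then p ω else 0) *
                (∑ ω : Ω, if Z ω = c ∧ Y ω = b ∧ W ω = d then p ω else 0)))
      from Finset.sum_comm]
  rw [← Finset.sum_add_distrib]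
  refine Finset.sum_congr rfl fun b _ => ?_
  -- expand the first RHS summand over c
  have hM : ∀ d : D, (∑ ω : Ω, if X ω = a ∧ Y ω = b ∧ W ω = d then p ω else 0)
      = ∑ c : C, ∑ ω : Ω, if X ω = a ∧ (Y ω = b ∧ Z ω = c) ∧ W ω = d then p ω else 0 := by
    intro d
    rw [← pr_marg p Z (q := fun ω => X ω = a ∧ Y ω = b ∧ W ω = d)]
    refine Finset.sum_congr rfl fun c _ => pr_congr p fun ω => ?_
    beta_reduce
    tauto
  rw [show (∑ d : D,
        (∑ ω : Ω, if X ω = a ∧ Y ω = b ∧ W ω = d then p ω else 0) *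
          Real.log
            ((∑ ω : Ω, if X ω = a ∧ Y ω = b ∧ W ω = d then p ω else 0) *
                (∑ ω : Ω, if W ω = d then p ω else 0) /
              ((∑ ω : Ω, if X ω = a ∧ W ω = d then p ω else 0) *
                (∑ ω : Ω, if Y ω = b ∧ W ω = d then p ω else 0))))
      = ∑ c : C, ∑ d : D,
        (∑ ω : Ω, if X ω = a ∧ (Y ω = b ∧ Z ω = c) ∧ W ω = d then p ω else 0) *
          Real.log
            ((∑ ω : Ω, if X ω = a ∧ Y ω = b ∧ W ω = d then p ω else 0) *
                (∑ ω : Ω, if W ω = d then p ω else 0) /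
              ((∑ ω : Ω, if X ω = a ∧ W ω = d then p ω else 0) *
                (∑ ω : Ω, if Y ω = b ∧ W ω = d then p ω else 0)))
      from by
        rw [Finset.sum_comm]
        exact Finset.sum_congr rfl fun d _ => by rw [hM d, Finset.sum_mul]]
  rw [← Finset.sum_add_distrib]
  refine Finset.sum_congr rfl fun c _ => ?_
  rw [← Finset.sum_add_distrib]
  refine Finset.sum_congr rfl fun d _ => ?_
  have e1 : (∑ ω : Ω, if X ω = a ∧ Z ω = c ∧ Y ω = b ∧ W ω = d then p ω else 0)
      = ∑ ω : Ω, if X ω = a ∧ (Y ω = b ∧ Z ω = c) ∧ W ω = d then p ω else 0 :=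
    pr_congr p fun ω => by tauto
  have e2 : (∑ ω : Ω, if Z ω = c ∧ Y ω = b ∧ W ω = d then p ω else 0)
      = ∑ ω : Ω, if (Y ω = b ∧ Z ω = c) ∧ W ω = d then p ω else 0 :=
    pr_congr p fun ω => by tauto
  rw [e1, e2]
  exact chain_term _ _ _ _ _ _ (pr_nonneg p hp)
    (pr_mono p hp fun ω h => ⟨h.1, h.2.1.1, h.2.2⟩)
    (pr_mono p hp fun ω h => ⟨h.1, h.2.2⟩)
    (pr_mono p hp fun ω h => ⟨h.2.1.1, h.2.2⟩)
    (pr_mono p hp fun ω h => ⟨h.2.1, h.2.2⟩)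
    (pr_mono p hp fun ω h => h.2.2)

lemma condMI_symm {Ω A B C : Type} [Fintype Ω] [Fintype A] [Fintype B] [Fintype C]
    [DecidableEq A] [DecidableEq B] [DecidableEq C]
    (p : Ω → ℝ) (X : Ω → A) (Y : Ω → B) (Z : Ω → C) :
    condMI p X Y Z = condMI p Y X Z := by
  unfold condMI
  rw [Finset.sum_comm]
  refine Finset.sum_congr rfl fun b _ => Finset.sum_congr rfl fun a _ =>
    Finset.sum_congr rfl fun c _ => ?_
  have e : (∑ ω : Ω, if X ω = a ∧ Y ω = b ∧ Z ω = c then p ω else 0)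
      = ∑ ω : Ω, if Y ω = b ∧ X ω = a ∧ Z ω = c then p ω else 0 :=
    pr_congr p fun ω => by tauto
  rw [e, mul_comm (∑ ω : Ω, if X ω = a ∧ Z ω = c then p ω else 0)
    (∑ ω : Ω, if Y ω = b ∧ Z ω = c then p ω else 0)]

lemma condMI_equiv_z {Ω A B C C' : Type} [Fintype Ω] [Fintype A] [Fintype B] [Fintype C]
    [Fintype C'] [DecidableEq A] [DecidableEq B] [DecidableEq C] [DecidableEq C']
    (p : Ω → ℝ) (X : Ω → A) (Y : Ω → B) (Z : Ω → C) (e : C ≃ C') :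
    condMI p X Y (fun ω => e (Z ω)) = condMI p X Y Z := by
  unfold condMI
  refine Finset.sum_congr rfl fun a _ => Finset.sum_congr rfl fun b _ => ?_
  rw [← Equiv.sum_comp e]
  refine Finset.sum_congr rfl fun c _ => ?_
  simp only [Equiv.apply_eq_iff_eq]

lemma condMI_equiv_y {Ω A B B' C : Type} [Fintype Ω] [Fintype A] [Fintype B] [Fintype B']
    [Fintype C] [DecidableEq A] [DecidableEq B] [DecidableEq B'] [DecidableEq C]
    (p : Ω → ℝ) (X : Ω → A) (Y : Ω → B) (Z : Ω → C) (e : B ≃ B') :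
    condMI p X (fun ω => e (Y ω)) Z = condMI p X Y Z := by
  unfold condMI
  refine Finset.sum_congr rfl fun a _ => ?_
  rw [← Equiv.sum_comp e]
  refine Finset.sum_congr rfl fun b _ => ?_
  simp only [Equiv.apply_eq_iff_eq]

theorem stmt2 {Ω A B C D : Type} [Fintype Ω] [Fintype A] [Fintype B] [Fintype C] [Fintype D]
    [DecidableEq A] [DecidableEq B] [DecidableEq C] [DecidableEq D]
    (p : Ω → ℝ) (hp : ∀ ω, 0 ≤ p ω) (hp1 : ∑ ω : Ω, p ω = 1)
    (v1 : Ω → A) (v2 : Ω → B) (y : Ω → C) (z1 : Ω → D)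
    (hrep : condMI p y z1 (fun ω => (v1 ω, v2 ω)) = 0) :
    mi p y z1 ≥ mi p y (fun ω => (v1 ω, v2 ω))
      - condMI p v1 v2 z1 - condMI p v1 y v2 - condMI p v2 y v1 := by
  -- Step 1: mi p y z1 = mi p y V - I(y;V|z1)
  have ha : mi p y (fun ω => (z1 ω, (v1 ω, v2 ω)))
      = mi p y z1 + condMI p y (fun ω => (v1 ω, v2 ω)) (fun ω => (z1 ω, ())) :=
    condMI_chain p hp y z1 (fun ω => (v1 ω, v2 ω)) (fun _ => ())
  have hb : condMI p y (fun ω => (v1 ω, v2 ω)) (fun ω => (z1 ω, ()))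
      = condMI p y (fun ω => (v1 ω, v2 ω)) z1 :=
    condMI_equiv_z p y (fun ω => (v1 ω, v2 ω)) z1
      ⟨fun d => (d, ()), Prod.fst, fun _ => rfl, fun _ => rfl⟩
  have hc : mi p y (fun ω => ((v1 ω, v2 ω), z1 ω))
      = mi p y (fun ω => (v1 ω, v2 ω)) + condMI p y z1 (fun ω => ((v1 ω, v2 ω), ())) :=
    condMI_chain p hp y (fun ω => (v1 ω, v2 ω)) z1 (fun _ => ())
  have hd : condMI p y z1 (fun ω => ((v1 ω, v2 ω), ()))
      = condMI p y z1 (fun ω => (v1 ω, v2 ω)) :=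
    condMI_equiv_z p y z1 (fun ω => (v1 ω, v2 ω))
      ⟨fun x => (x, ()), Prod.fst, fun _ => rfl, fun _ => rfl⟩
  have he : mi p y (fun ω => (z1 ω, (v1 ω, v2 ω)))
      = mi p y (fun ω => ((v1 ω, v2 ω), z1 ω)) := by
    exact condMI_equiv_y p y (fun ω => ((v1 ω, v2 ω), z1 ω)) (fun _ => ())
      swapEquiv
  -- Step 2: chain for I(y;V|z1)
  have h3 : condMI p y (fun ω => (v1 ω, v2 ω)) z1
      = condMI p y v1 z1 + condMI p y v2 (fun ω => (v1 ω, z1 ω)) :=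
    condMI_chain p hp y v1 v2 z1
  -- Step 3: bound I(y;v2|v1,z1) ≤ I(v2;y|v1)
  have h4a : condMI p y v2 (fun ω => (v1 ω, z1 ω))
      = condMI p y v2 (fun ω => (z1 ω, v1 ω)) := by
    exact condMI_equiv_z p y v2 (fun ω => (z1 ω, v1 ω)) swapEquiv
  have h4b : condMI p y (fun ω => (z1 ω, v2 ω)) v1
      = condMI p y z1 v1 + condMI p y v2 (fun ω => (z1 ω, v1 ω)) :=
    condMI_chain p hp y z1 v2 v1
  have h4c : condMI p y (fun ω => (v2 ω, z1 ω)) v1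
      = condMI p y v2 v1 + condMI p y z1 (fun ω => (v2 ω, v1 ω)) :=
    condMI_chain p hp y v2 z1 v1
  have h4d : condMI p y (fun ω => (z1 ω, v2 ω)) v1
      = condMI p y (fun ω => (v2 ω, z1 ω)) v1 :=
    condMI_equiv_y p y (fun ω => (v2 ω, z1 ω)) v1 (swapEquiv)
  have h4e : condMI p y z1 (fun ω => (v2 ω, v1 ω))
      = condMI p y z1 (fun ω => (v1 ω, v2 ω)) :=
    condMI_equiv_z p y z1 (fun ω => (v1 ω, v2 ω)) (swapEquiv)
  have h4f : 0 ≤ condMI p y z1 v1 := condMI_nonneg p hp y z1 v1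
  have h4g : condMI p y v2 v1 = condMI p v2 y v1 := condMI_symm p y v2 v1
  -- Step 4: bound I(y;v1|z1) ≤ I(v1;v2|z1) + I(v1;y|v2)
  have h5a : condMI p y v1 z1 = condMI p v1 y z1 := condMI_symm p y v1 z1
  have h5b : condMI p v1 (fun ω => (v2 ω, y ω)) z1
      = condMI p v1 v2 z1 + condMI p v1 y (fun ω => (v2 ω, z1 ω)) :=
    condMI_chain p hp v1 v2 y z1
  have h5c : condMI p v1 (fun ω => (y ω, v2 ω)) z1
      = condMI p v1 y z1 + condMI p v1 v2 (fun ω => (y ω, z1 ω)) :=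
    condMI_chain p hp v1 y v2 z1
  have h5d : condMI p v1 (fun ω => (y ω, v2 ω)) z1
      = condMI p v1 (fun ω => (v2 ω, y ω)) z1 :=
    condMI_equiv_y p v1 (fun ω => (v2 ω, y ω)) z1 (swapEquiv)
  have h5e : 0 ≤ condMI p v1 v2 (fun ω => (y ω, z1 ω)) :=
    condMI_nonneg p hp v1 v2 _
  have h5f : condMI p v1 y (fun ω => (v2 ω, z1 ω))
      = condMI p y v1 (fun ω => (v2 ω, z1 ω)) := condMI_symm p v1 y _
  have h5g : condMI p y v1 (fun ω => (v2 ω, z1 ω))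
      = condMI p y v1 (fun ω => (z1 ω, v2 ω)) := by
    exact condMI_equiv_z p y v1 (fun ω => (z1 ω, v2 ω)) swapEquiv
  have h5h : condMI p y (fun ω => (z1 ω, v1 ω)) v2
      = condMI p y z1 v2 + condMI p y v1 (fun ω => (z1 ω, v2 ω)) :=
    condMI_chain p hp y z1 v1 v2
  have h5i : condMI p y (fun ω => (v1 ω, z1 ω)) v2
      = condMI p y v1 v2 + condMI p y z1 (fun ω => (v1 ω, v2 ω)) :=
    condMI_chain p hp y v1 z1 v2
  have h5j : condMI p y (fun ω => (z1 ω, v1 ω)) v2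
      = condMI p y (fun ω => (v1 ω, z1 ω)) v2 :=
    condMI_equiv_y p y (fun ω => (v1 ω, z1 ω)) v2 (swapEquiv)
  have h5k : 0 ≤ condMI p y z1 v2 := condMI_nonneg p hp y z1 v2
  have h5l : condMI p y v1 v2 = condMI p v1 y v2 := condMI_symm p y v1 v2
  linarith
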